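/- Let I ⊆ (0,∞) be a nonempty open interval, let f, g : I → ℝ be twice continuously differentiable with nowhere vanishing first derivatives, let n ≥ 2, let λ_1,…,λ_n, μ_1,…,μ_n > 0 and α_1,…,α_n, β_1,…,β_n ∈ ℝ, and define p_i(x) := λ_i x^{α_i} and q_i(x) := μ_i x^{β_i} for i ∈ {1,…,n} and x ∈ I. If there exist γ > 0 and δ ∈ ℝ such that μ_i = γ λ_i and β_i = α_i + δ for all i ∈ {1,…,n}, and the function x ↦ x^{2δ} |g'(x)| / |f'(x)| has an everywhere positive derivative on I, then A_{f,p} is locally smaller than A_{g,q}. -/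

import Mathlib

open Set Function Real


lemma sign_const {s : Set ℝ} (hs : IsPreconnected s) {h : ℝ → ℝ}
    (hc : ContinuousOn h s) (h0 : ∀ x ∈ s, h x ≠ 0) :
    (∀ x ∈ s, 0 < h x) ∨ (∀ x ∈ s, h x < 0) := by
  by_contra hcon
  push_neg at hcon
  obtain ⟨⟨a, ha, ha'⟩, ⟨b, hb, hb'⟩⟩ := hcon
  have h0m : (0:ℝ) ∈ Icc (h a) (h b) := ⟨ha', hb'⟩
  obtain ⟨c, hc', hc0⟩ := hs.intermediate_value ha hb hc h0m
  exact h0 c hc' hc0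

lemma sign_factor {s : Set ℝ} (hs : IsPreconnected s) {h : ℝ → ℝ}
    (hc : ContinuousOn h s) (h0 : ∀ x ∈ s, h x ≠ 0) :
    ∃ σ : ℝ, (σ = 1 ∨ σ = -1) ∧ ∀ x ∈ s, σ * h x = |h x| := by
  rcases sign_const hs hc h0 with hp | hn
  · exact ⟨1, Or.inl rfl, fun x hx => by rw [one_mul, abs_of_pos (hp x hx)]⟩
  · exact ⟨-1, Or.inr rfl, fun x hx => by rw [abs_of_neg (hn x hx)]; ring⟩

lemma avg_le {n : ℕ} (hne : Nonempty (Fin n)) (c u : Fin n → ℝ) (hc : ∀ i, 0 < c i) :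
    ∃ k, (∑ i, c i * u i) / (∑ i, c i) ≤ u k := by
  haveI := hne
  by_contra hcon
  push_neg at hcon
  have hS : 0 < ∑ i, c i := Finset.sum_pos (fun i _ => hc i) Finset.univ_nonempty
  have h1 : ∑ i, c i * u i < ∑ i, c i * ((∑ i, c i * u i) / (∑ i, c i)) :=
    Finset.sum_lt_sum_of_nonempty Finset.univ_nonempty
      (fun i _ => mul_lt_mul_of_pos_left (hcon i) (hc i))
  rw [← Finset.sum_mul, mul_comm, div_mul_cancel₀ _ (ne_of_gt hS)] at h1
  exact lt_irrefl _ h1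

lemma le_avg {n : ℕ} (hne : Nonempty (Fin n)) (c u : Fin n → ℝ) (hc : ∀ i, 0 < c i) :
    ∃ j, u j ≤ (∑ i, c i * u i) / (∑ i, c i) := by
  haveI := hne
  by_contra hcon
  push_neg at hcon
  have hS : 0 < ∑ i, c i := Finset.sum_pos (fun i _ => hc i) Finset.univ_nonempty
  have h1 : ∑ i, c i * ((∑ i, c i * u i) / (∑ i, c i)) < ∑ i, c i * u i :=
    Finset.sum_lt_sum_of_nonempty Finset.univ_nonempty
      (fun i _ => mul_lt_mul_of_pos_left (hcon i) (hc i))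
  rw [← Finset.sum_mul, mul_comm, div_mul_cancel₀ _ (ne_of_gt hS)] at h1
  exact lt_irrefl _ h1

/-- The `n`-variable generalized Bajraktarević mean `A_{f,p}` on the interval `I`:
`A_{f,p}(x) = f⁻¹((∑ pᵢ(xᵢ) f(xᵢ)) / (∑ pᵢ(xᵢ)))`. -/
noncomputable def bajMean {n : ℕ} (I : Set ℝ) (f : ℝ → ℝ) (p : Fin n → ℝ → ℝ)
    (x : Fin n → ℝ) : ℝ :=
  Function.invFunOn f I ((∑ i, p i (x i) * f (x i)) / (∑ i, p i (x i)))

/-- The `i`-th first-order partial derivative of `Φ : Iⁿ → ℝ`. -/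
noncomputable def pder {n : ℕ} (Φ : (Fin n → ℝ) → ℝ) (i : Fin n) (y : Fin n → ℝ) : ℝ :=
  deriv (fun t => Φ (Function.update y i t)) (y i)

/-- The second-order partial derivative `∂ᵢ∂ⱼΦ`. -/
noncomputable def pder2 {n : ℕ} (Φ : (Fin n → ℝ) → ℝ) (i j : Fin n) :
    (Fin n → ℝ) → ℝ :=
  pder (pder Φ j) i

/-- `M` is locally smaller than `N`: there is an open set `U ⊆ Iⁿ` containing the
diagonal of `Iⁿ` on which `M ≤ N`. -/
def LocallySmaller {n : ℕ} (I : Set ℝ) (M N : (Fin n → ℝ) → ℝ) : Prop :=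
  ∃ U : Set (Fin n → ℝ), IsOpen U ∧ U ⊆ {x | ∀ i, x i ∈ I} ∧
    (∀ x ∈ I, (fun _ => x) ∈ U) ∧ ∀ x ∈ U, M x ≤ N x

/-- Corollary LCp, sufficiency part: with power weight functions `pᵢ(x) = λᵢ x^{αᵢ}`,
`qᵢ(x) = μᵢ x^{βᵢ}` on `I ⊆ (0,∞)`, `f, g` twice continuously differentiable with
nonvanishing first derivatives, if `μᵢ = γλᵢ`, `βᵢ = αᵢ + δ` for all `i` (with `γ > 0`)
and `x ↦ x^{2δ}|g'(x)|/|f'(x)|` has an everywhere positive derivative on `I`, then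
`A_{f,p}` is locally smaller than `A_{g,q}`. -/
theorem stmt10 {n : ℕ} (hn : 2 ≤ n) (I : Set ℝ) (hIopen : IsOpen I)
    (hIconn : I.OrdConnected) (hIne : I.Nonempty) (hIpos : I ⊆ Set.Ioi (0 : ℝ))
    (f f' f'' g g' g'' : ℝ → ℝ)
    (hf : ∀ x ∈ I, HasDerivAt f (f' x) x) (hf2 : ∀ x ∈ I, HasDerivAt f' (f'' x) x)
    (hf2c : ContinuousOn f'' I) (hf'0 : ∀ x ∈ I, f' x ≠ 0)
    (hg : ∀ x ∈ I, HasDerivAt g (g' x) x) (hg2 : ∀ x ∈ I, HasDerivAt g' (g'' x) x)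
    (hg2c : ContinuousOn g'' I) (hg'0 : ∀ x ∈ I, g' x ≠ 0)
    (lam mu : Fin n → ℝ) (al be : Fin n → ℝ)
    (hlam : ∀ i, 0 < lam i) (hmu : ∀ i, 0 < mu i)
    (γ δ : ℝ) (hγ : 0 < γ)
    (hrel : ∀ i : Fin n, mu i = γ * lam i ∧ be i = al i + δ)
    (hposder : ∀ x ∈ I, ∃ d : ℝ, 0 < d ∧
      HasDerivAt (fun y => y ^ (2 * δ) * |g' y| / |f' y|) d x) :
    LocallySmaller I (bajMean I f (fun i x => lam i * x ^ al i))
      (bajMean I g (fun i x => mu i * x ^ be i)) := by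
  haveI hne : Nonempty (Fin n) := ⟨⟨0, by omega⟩⟩
  have hIconv : Convex ℝ I := convex_iff_ordConnected.mpr hIconn
  have hIprec : IsPreconnected I := hIconv.isPreconnected
  have hpos : ∀ x ∈ I, (0:ℝ) < x := fun x hx => hIpos hx
  have hfc : ContinuousOn f I := fun x hx => (hf x hx).continuousAt.continuousWithinAt
  have hgc : ContinuousOn g I := fun x hx => (hg x hx).continuousAt.continuousWithinAt
  have hf'c : ContinuousOn f' I := fun x hx => (hf2 x hx).continuousAt.continuousWithinAt
  have hg'c : ContinuousOn g' I := fun x hx => (hg2 x hx).continuousAt.continuousWithinAt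
  obtain ⟨σ, hσ1, hσ⟩ := sign_factor hIprec hf'c hf'0
  obtain ⟨s, hs1, hs⟩ := sign_factor hIprec hg'c hg'0
  have hσf : ∀ x ∈ I, 0 < σ * f' x := fun x hx => by
    rw [hσ x hx]; exact abs_pos.mpr (hf'0 x hx)
  have hsg : ∀ x ∈ I, 0 < s * g' x := fun x hx => by
    rw [hs x hx]; exact abs_pos.mpr (hg'0 x hx)
  have hFmono : StrictMonoOn (fun x => σ * f x) I := by
    apply strictMonoOn_of_deriv_pos hIconv (continuousOn_const.mul hfc)
    intro x hx
    rw [hIopen.interior_eq] at hx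
    show 0 < deriv (fun y => σ * f y) x
    rw [((hf x hx).const_mul σ).deriv]
    exact hσf x hx
  have hGmono : StrictMonoOn (fun x => s * g x) I := by
    apply strictMonoOn_of_deriv_pos hIconv (continuousOn_const.mul hgc)
    intro x hx
    rw [hIopen.interior_eq] at hx
    show 0 < deriv (fun y => s * g y) x
    rw [((hg x hx).const_mul s).deriv]
    exact hsg x hx
  set K : ℝ → ℝ := fun u => s * u ^ δ * g' u / f' u with hK
  set χ : ℝ → ℝ → ℝ := fun u t => s * (t ^ δ * (g t - g u)) - K u * (f t - f u) with hχ
  set χ1 : ℝ → ℝ → ℝ := fun u t =>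
    s * (δ * t ^ (δ-1) * (g t - g u) + t ^ δ * g' t) - K u * f' t with hχ1
  set χ2 : ℝ → ℝ → ℝ := fun u t =>
    s * (δ * ((δ-1) * t ^ (δ-2) * (g t - g u) + t ^ (δ-1) * g' t)
      + (δ * t ^ (δ-1) * g' t + t ^ δ * g'' t)) - K u * f'' t with hχ2
  have hd1 : ∀ u : ℝ, ∀ t ∈ I, HasDerivAt (χ u) (χ1 u t) t := by
    intro u t ht
    have htne : t ≠ 0 := ne_of_gt (hpos t ht)
    have h1 : HasDerivAt (fun t : ℝ => t ^ δ) (δ * t ^ (δ-1)) t :=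
      Real.hasDerivAt_rpow_const (Or.inl htne)
    have h2 : HasDerivAt (fun t => g t - g u) (g' t) t := (hg t ht).sub_const _
    have h3 := (h1.mul h2).const_mul s
    have h4 := ((hf t ht).sub_const (f u)).const_mul (K u)
    exact h3.sub h4
  have hd2 : ∀ u : ℝ, ∀ t ∈ I, HasDerivAt (χ1 u) (χ2 u t) t := by
    intro u t ht
    have htne : t ≠ 0 := ne_of_gt (hpos t ht)
    have h1 : HasDerivAt (fun t : ℝ => t ^ (δ-1)) ((δ-1) * t ^ (δ-2)) t := by
      have h := Real.hasDerivAt_rpow_const (x := t) (p := δ-1) (Or.inl htne)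
      have e : δ - 1 - 1 = δ - 2 := by ring
      rwa [e] at h
    have h3 : HasDerivAt (fun t : ℝ => t ^ δ) (δ * t ^ (δ-1)) t :=
      Real.hasDerivAt_rpow_const (Or.inl htne)
    have h2 : HasDerivAt (fun t => g t - g u) (g' t) t := (hg t ht).sub_const _
    have hA := (h1.const_mul δ).mul h2
    have hB := h3.mul (hg2 t ht)
    have hC := (hA.add hB).const_mul s
    have hD := (hf2 t ht).const_mul (K u)
    have := hC.sub hD
    refine this.congr_deriv ?_
    show _ = χ2 u t
    simp only [hχ2]
    ring
  have hχuu : ∀ u : ℝ, χ u u = 0 := by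
    intro u; simp [hχ]
  have hχ1uu : ∀ u ∈ I, χ1 u u = 0 := by
    intro u hu
    have h0 := hf'0 u hu
    simp only [hχ1, hK, sub_self, mul_zero, zero_add]
    field_simp
    ring
  have hχ2mm : ∀ m ∈ I, 0 < χ2 m m := by
    intro m hm
    obtain ⟨d, hd, hdd⟩ := hposder m hm
    have hmpos := hpos m hm
    have hmne : m ≠ 0 := ne_of_gt hmpos
    have hev : (fun y => y ^ (2*δ) * (s * g' y) / (σ * f' y)) =ᶠ[nhds m]
        (fun y => y ^ (2*δ) * |g' y| / |f' y|) := by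
      filter_upwards [hIopen.mem_nhds hm] with y hy
      rw [hs y hy, hσ y hy]
    have hdd' : HasDerivAt (fun y => y ^ (2*δ) * (s * g' y) / (σ * f' y)) d m :=
      hev.hasDerivAt_iff.mpr hdd
    have h1 : HasDerivAt (fun y : ℝ => y ^ (2*δ)) ((2*δ) * m ^ (2*δ-1)) m :=
      Real.hasDerivAt_rpow_const (Or.inl hmne)
    have h2 : HasDerivAt (fun y => s * g' y) (s * g'' m) m := (hg2 m hm).const_mul s
    have h3 : HasDerivAt (fun y => σ * f' y) (σ * f'' m) m := (hf2 m hm).const_mul σ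
    have hne3 : σ * f' m ≠ 0 := ne_of_gt (hσf m hm)
    have h4 := (h1.mul h2).div h3 hne3
    have hde := h4.unique hdd'
    have hkey : χ2 m m = σ * f' m / m ^ δ * d := by
      rw [← hde]
      have e1 : m ^ (2*δ-1) = m^δ * m^δ / m := by
        rw [show 2*δ-1 = δ+δ-1 by ring, Real.rpow_sub hmpos, Real.rpow_add hmpos,
          Real.rpow_one]
      have e2 : m ^ (2*δ) = m^δ * m^δ := by
        rw [show 2*δ = δ+δ by ring, Real.rpow_add hmpos]
      have e3 : m ^ (δ-1) = m^δ / m := by rw [Real.rpow_sub hmpos, Real.rpow_one]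
      have hAne : m ^ δ ≠ 0 := ne_of_gt (Real.rpow_pos_of_pos hmpos δ)
      have hfne := hf'0 m hm
      simp only [hχ2, hK, sub_self, mul_zero, zero_mul, zero_add, e1, e2, e3, Pi.mul_apply]
      rcases hσ1 with rfl | rfl <;> rcases hs1 with rfl | rfl <;>
        field_simp <;> ring
    rw [hkey]
    exact mul_pos (div_pos (hσf m hm) (Real.rpow_pos_of_pos hmpos δ)) hd
  have hrho : ∀ m ∈ I, ∃ ρ > (0:ℝ), Ioo (m-ρ) (m+ρ) ⊆ I ∧
      ∀ u ∈ Ioo (m-ρ) (m+ρ), ∀ t ∈ Ioo (m-ρ) (m+ρ), 0 < χ2 u t := by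
    intro m hm
    have hmpos := hpos m hm
    have hmne : m ≠ 0 := ne_of_gt hmpos
    have hImem : I ∈ nhds m := hIopen.mem_nhds hm
    -- continuity of the pair function at (m,m)
    have c1 : ContinuousAt (fun q : ℝ × ℝ => q.2 ^ (δ-2)) (m, m) :=
      (Real.continuousAt_rpow_const m (δ-2) (Or.inl hmne)).comp (g := fun x : ℝ => x ^ (δ-2)) continuousAt_snd
    have c2 : ContinuousAt (fun q : ℝ × ℝ => q.2 ^ (δ-1)) (m, m) :=
      (Real.continuousAt_rpow_const m (δ-1) (Or.inl hmne)).comp (g := fun x : ℝ => x ^ (δ-1)) continuousAt_snd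
    have c3 : ContinuousAt (fun q : ℝ × ℝ => q.2 ^ δ) (m, m) :=
      (Real.continuousAt_rpow_const m (δ) (Or.inl hmne)).comp (g := fun x : ℝ => x ^ (δ)) continuousAt_snd
    have c4 : ContinuousAt (fun q : ℝ × ℝ => q.1 ^ δ) (m, m) :=
      (Real.continuousAt_rpow_const m (δ) (Or.inl hmne)).comp (g := fun x : ℝ => x ^ (δ)) continuousAt_fst
    have cg1 : ContinuousAt (fun q : ℝ × ℝ => g q.1) (m, m) :=
      (hg m hm).continuousAt.comp continuousAt_fst
    have cg2 : ContinuousAt (fun q : ℝ × ℝ => g q.2) (m, m) :=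
      (hg m hm).continuousAt.comp continuousAt_snd
    have cg'2 : ContinuousAt (fun q : ℝ × ℝ => g' q.2) (m, m) :=
      (hg2 m hm).continuousAt.comp continuousAt_snd
    have cg'1 : ContinuousAt (fun q : ℝ × ℝ => g' q.1) (m, m) :=
      (hg2 m hm).continuousAt.comp continuousAt_fst
    have cf'1 : ContinuousAt (fun q : ℝ × ℝ => f' q.1) (m, m) :=
      (hf2 m hm).continuousAt.comp continuousAt_fst
    have cg''2 : ContinuousAt (fun q : ℝ × ℝ => g'' q.2) (m, m) :=
      (hg2c.continuousAt hImem).comp continuousAt_snd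
    have cf''2 : ContinuousAt (fun q : ℝ × ℝ => f'' q.2) (m, m) :=
      (hf2c.continuousAt hImem).comp continuousAt_snd
    have hct : ContinuousAt (fun q : ℝ × ℝ => χ2 q.1 q.2) (m, m) := by
      simp only [hχ2, hK]
      exact (continuousAt_const.mul
        ((continuousAt_const.mul
          (((continuousAt_const.mul c1).mul (cg2.sub cg1)).add (c2.mul cg'2))).add
          (((continuousAt_const.mul c2).mul cg'2).add (c3.mul cg''2)))).sub
        ((((continuousAt_const.mul c4).mul cg'1).div cf'1 (hf'0 m hm)).mul cf''2)
    have hWmem : {q : ℝ × ℝ | 0 < χ2 q.1 q.2} ∈ nhds (m, m) :=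
      hct.preimage_mem_nhds (Ioi_mem_nhds (hχ2mm m hm))
    have hIImem : (I ×ˢ I : Set (ℝ × ℝ)) ∈ nhds (m, m) := prod_mem_nhds hImem hImem
    have hmem := Filter.inter_mem hWmem hIImem
    rw [nhds_prod_eq, Filter.mem_prod_iff] at hmem
    obtain ⟨t₁, ht₁, t₂, ht₂, hsub⟩ := hmem
    obtain ⟨ε₁, hε₁, hb₁⟩ := Metric.mem_nhds_iff.mp ht₁
    obtain ⟨ε₂, hε₂, hb₂⟩ := Metric.mem_nhds_iff.mp ht₂
    refine ⟨min ε₁ ε₂, lt_min hε₁ hε₂, ?_, ?_⟩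
    · intro u hu
      have hu1 : u ∈ t₁ := hb₁ (by
        rw [Real.ball_eq_Ioo]
        exact ⟨lt_of_le_of_lt (by linarith [min_le_left ε₁ ε₂]) hu.1,
          lt_of_lt_of_le hu.2 (by linarith [min_le_left ε₁ ε₂])⟩)
      have hu2 : u ∈ t₂ := hb₂ (by
        rw [Real.ball_eq_Ioo]
        exact ⟨lt_of_le_of_lt (by linarith [min_le_right ε₁ ε₂]) hu.1,
          lt_of_lt_of_le hu.2 (by linarith [min_le_right ε₁ ε₂])⟩)
      exact (hsub (Set.mk_mem_prod hu1 hu2)).2.1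
    · intro u hu t ht
      have hu1 : u ∈ t₁ := hb₁ (by
        rw [Real.ball_eq_Ioo]
        exact ⟨lt_of_le_of_lt (by linarith [min_le_left ε₁ ε₂]) hu.1,
          lt_of_lt_of_le hu.2 (by linarith [min_le_left ε₁ ε₂])⟩)
      have ht2 : t ∈ t₂ := hb₂ (by
        rw [Real.ball_eq_Ioo]
        exact ⟨lt_of_le_of_lt (by linarith [min_le_right ε₁ ε₂]) ht.1,
          lt_of_lt_of_le ht.2 (by linarith [min_le_right ε₁ ε₂])⟩)
      exact (hsub (Set.mk_mem_prod hu1 ht2)).1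
  have main : ∀ m ∈ I, ∀ ρ > (0:ℝ), Ioo (m-ρ) (m+ρ) ⊆ I →
      (∀ u ∈ Ioo (m-ρ) (m+ρ), ∀ t ∈ Ioo (m-ρ) (m+ρ), 0 < χ2 u t) →
      ∀ x : Fin n → ℝ, (∀ i, x i ∈ Ioo (m-ρ) (m+ρ)) →
      bajMean I f (fun i x => lam i * x ^ al i) x ≤
        bajMean I g (fun i x => mu i * x ^ be i) x := by
    intro m hm ρ hρ hJI hψ x hx
    have hxI : ∀ i, x i ∈ I := fun i => hJI (hx i)
    have hxpos : ∀ i, 0 < x i := fun i => hpos _ (hxI i)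
    -- nonnegativity of χ on the box
    have hχnonneg : ∀ u ∈ Ioo (m-ρ) (m+ρ), ∀ t ∈ Ioo (m-ρ) (m+ρ), 0 ≤ χ u t := by
      intro u hu t ht
      have hcont : ContinuousOn (χ u) (Ioo (m-ρ) (m+ρ)) := fun r hr =>
        (hd1 u r (hJI hr)).continuousAt.continuousWithinAt
      have hmono1 : StrictMonoOn (χ1 u) (Ioo (m-ρ) (m+ρ)) := by
        apply strictMonoOn_of_deriv_pos (convex_Ioo _ _)
          (fun r hr => (hd2 u r (hJI hr)).continuousAt.continuousWithinAt)
        intro r hr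
        rw [interior_Ioo] at hr
        rw [(hd2 u r (hJI hr)).deriv]
        exact hψ u hu r hr
      rcases le_total t u with htu | hut
      · have hsub : Ioc (m-ρ) u ⊆ Ioo (m-ρ) (m+ρ) := fun r hr =>
          ⟨hr.1, lt_of_le_of_lt hr.2 hu.2⟩
        have hanti : AntitoneOn (χ u) (Ioc (m-ρ) u) := by
          apply antitoneOn_of_deriv_nonpos (convex_Ioc _ _) (hcont.mono hsub)
          · intro r hr
            rw [interior_Ioc] at hr
            have hrJ : r ∈ Ioo (m-ρ) (m+ρ) := ⟨hr.1, lt_trans hr.2 hu.2⟩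
            exact (hd1 u r (hJI hrJ)).differentiableAt.differentiableWithinAt
          · intro r hr
            rw [interior_Ioc] at hr
            have hrJ : r ∈ Ioo (m-ρ) (m+ρ) := ⟨hr.1, lt_trans hr.2 hu.2⟩
            rw [(hd1 u r (hJI hrJ)).deriv]
            have h5 : χ1 u r < χ1 u u := hmono1 hrJ hu hr.2
            rw [hχ1uu u (hJI hu)] at h5
            exact le_of_lt h5
        have h6 := hanti ⟨ht.1, htu⟩ ⟨hu.1, le_refl u⟩ htu
        rwa [hχuu u] at h6
      · have hsub : Ico u (m+ρ) ⊆ Ioo (m-ρ) (m+ρ) := fun r hr =>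
          ⟨lt_of_lt_of_le hu.1 hr.1, hr.2⟩
        have hmono : MonotoneOn (χ u) (Ico u (m+ρ)) := by
          apply monotoneOn_of_deriv_nonneg (convex_Ico _ _) (hcont.mono hsub)
          · intro r hr
            rw [interior_Ico] at hr
            have hrJ : r ∈ Ioo (m-ρ) (m+ρ) := ⟨lt_trans hu.1 hr.1, hr.2⟩
            exact (hd1 u r (hJI hrJ)).differentiableAt.differentiableWithinAt
          · intro r hr
            rw [interior_Ico] at hr
            have hrJ : r ∈ Ioo (m-ρ) (m+ρ) := ⟨lt_trans hu.1 hr.1, hr.2⟩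
            rw [(hd1 u r (hJI hrJ)).deriv]
            have h5 : χ1 u u < χ1 u r := hmono1 hu hrJ hr.1
            rw [hχ1uu u (hJI hu)] at h5
            exact le_of_lt h5
        have h6 := hmono ⟨le_refl u, hu.2⟩ ⟨hut, ht.2⟩ hut
        rwa [hχuu u] at h6
    -- the f-side mean
    set c : Fin n → ℝ := fun i => lam i * x i ^ al i with hc
    have hcpos : ∀ i, 0 < c i := fun i =>
      mul_pos (hlam i) (Real.rpow_pos_of_pos (hxpos i) _)
    set S := ∑ i, c i with hS
    have hSpos : 0 < S := Finset.sum_pos (fun i _ => hcpos i) Finset.univ_nonempty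
    set v := (∑ i, c i * f (x i)) / S with hv
    obtain ⟨j, hj⟩ := le_avg hne c (fun i => f (x i)) hcpos
    obtain ⟨k, hk⟩ := avg_le hne c (fun i => f (x i)) hcpos
    have hvimg : v ∈ f '' I :=
      (hIprec.image f hfc).ordConnected.out ⟨x j, hxI j, rfl⟩ ⟨x k, hxI k, rfl⟩ ⟨hj, hk⟩
    obtain ⟨a0, ha0I, ha0⟩ := hvimg
    have hex : ∃ a ∈ I, f a = v := ⟨a0, ha0I, ha0⟩
    set y := Function.invFunOn f I v with hy
    have hyI : y ∈ I := Function.invFunOn_mem hex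
    have hfy : f y = v := Function.invFunOn_eq hex
    -- y in the box
    have h6 : ∑ i, c i * (σ * f (x i)) = σ * ∑ i, c i * f (x i) := by
      rw [Finset.mul_sum]; exact Finset.sum_congr rfl fun i _ => by ring
    have hyJ : y ∈ Ioo (m-ρ) (m+ρ) := by
      obtain ⟨j', hj'⟩ := le_avg hne c (fun i => σ * f (x i)) hcpos
      obtain ⟨k', hk'⟩ := avg_le hne c (fun i => σ * f (x i)) hcpos
      rw [h6, mul_div_assoc, ← hv, ← hfy] at hj' hk'
      have hj2 : x j' ≤ y := (hFmono.le_iff_le (hxI j') hyI).mp hj'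
      have hk2 : y ≤ x k' := (hFmono.le_iff_le hyI (hxI k')).mp hk'
      exact ⟨lt_of_lt_of_le (hx j').1 hj2, lt_of_le_of_lt hk2 (hx k').2⟩
    -- the g-side mean
    set dd : Fin n → ℝ := fun i => mu i * x i ^ be i with hdd
    have hddpos : ∀ i, 0 < dd i := fun i =>
      mul_pos (hmu i) (Real.rpow_pos_of_pos (hxpos i) _)
    set T := ∑ i, dd i with hT
    have hTpos : 0 < T := Finset.sum_pos (fun i _ => hddpos i) Finset.univ_nonempty
    set w := (∑ i, dd i * g (x i)) / T with hw
    obtain ⟨j2, hj2'⟩ := le_avg hne dd (fun i => g (x i)) hddpos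
    obtain ⟨k2, hk2'⟩ := avg_le hne dd (fun i => g (x i)) hddpos
    have hwimg : w ∈ g '' I :=
      (hIprec.image g hgc).ordConnected.out ⟨x j2, hxI j2, rfl⟩ ⟨x k2, hxI k2, rfl⟩
        ⟨hj2', hk2'⟩
    obtain ⟨b0, hb0I, hb0⟩ := hwimg
    have hex2 : ∃ a ∈ I, g a = w := ⟨b0, hb0I, hb0⟩
    set z := Function.invFunOn g I w with hz
    have hzI : z ∈ I := Function.invFunOn_mem hex2
    have hgz : g z = w := Function.invFunOn_eq hex2
    -- weight relation
    have hdc : ∀ i, dd i = γ * x i ^ δ * c i := by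
      intro i
      simp only [hdd, hc]
      rw [(hrel i).1, (hrel i).2, Real.rpow_add (hxpos i)]
      ring
    -- key nonnegativity
    have hsum0 : ∑ i, c i * (f (x i) - f y) = 0 := by
      have h7 : ∑ i, c i * (f (x i) - f y) = (∑ i, c i * f (x i)) - S * f y := by
        simp only [mul_sub]
        rw [Finset.sum_sub_distrib, ← Finset.sum_mul, hS]
      rw [h7, hfy, hv, mul_comm, div_mul_cancel₀ _ (ne_of_gt hSpos), sub_self]
    have hχge : ∀ i, 0 ≤ χ y (x i) := fun i => hχnonneg y hyJ (x i) (hx i)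
    have hkey : 0 ≤ ∑ i, c i * (s * (x i ^ δ * (g (x i) - g y))) := by
      have h8 : ∑ i, c i * (s * (x i ^ δ * (g (x i) - g y)))
          = (∑ i, c i * χ y (x i)) + K y * ∑ i, c i * (f (x i) - f y) := by
        rw [Finset.mul_sum, ← Finset.sum_add_distrib]
        refine Finset.sum_congr rfl fun i _ => ?_
        simp only [hχ]
        ring
      rw [h8, hsum0, mul_zero, add_zero]
      exact Finset.sum_nonneg fun i _ => mul_nonneg (hcpos i).le (hχge i)
    -- conclude
    have hTw : T * w = ∑ i, dd i * g (x i) := by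
      rw [hw, mul_comm, div_mul_cancel₀ _ (ne_of_gt hTpos)]
    have h9 : T * (s * w - s * g y) = γ * ∑ i, c i * (s * (x i ^ δ * (g (x i) - g y))) := by
      have h10 : T * (s * w - s * g y) = s * (T * w) - s * (∑ i, dd i) * g y := by
        rw [hT]; ring
      rw [h10, hTw, Finset.mul_sum, Finset.mul_sum, Finset.mul_sum, Finset.sum_mul,
        ← Finset.sum_sub_distrib]
      refine Finset.sum_congr rfl fun i _ => ?_
      rw [hdc i]
      ring
    have h11 : 0 ≤ T * (s * w - s * g y) := by
      rw [h9]
      exact mul_nonneg hγ.le hkey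
    have h12 : s * g y ≤ s * w := by nlinarith
    have h13 : y ≤ z := by
      refine (hGmono.le_iff_le hyI hzI).mp ?_
      simpa [hgz] using h12
    exact h13
  choose ρ hρpos hρI hρψ using fun (m : I) => hrho m m.2
  refine ⟨⋃ m : I, {x : Fin n → ℝ | ∀ i, x i ∈ Ioo ((m:ℝ) - ρ m) ((m:ℝ) + ρ m)},
    ?_, ?_, ?_, ?_⟩
  · apply isOpen_iUnion
    intro m
    have heq : {x : Fin n → ℝ | ∀ i, x i ∈ Ioo ((m:ℝ) - ρ m) ((m:ℝ) + ρ m)}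
        = ⋂ i, (fun x : Fin n → ℝ => x i) ⁻¹' (Ioo ((m:ℝ) - ρ m) ((m:ℝ) + ρ m)) := by
      ext x; simp
    rw [heq]
    exact isOpen_iInter_of_finite fun i => isOpen_Ioo.preimage (continuous_apply i)
  · intro x hx
    rw [mem_iUnion] at hx
    obtain ⟨m, hm⟩ := hx
    intro i
    exact hρI m (hm i)
  · intro x hxI
    refine mem_iUnion.mpr ⟨⟨x, hxI⟩, fun i => ?_⟩
    have := hρpos ⟨x, hxI⟩
    constructor <;> simp <;> linarith
  · intro x hx
    rw [mem_iUnion] at hx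
    obtain ⟨m, hm⟩ := hx
    exact main m m.2 (ρ m) (hρpos m) (hρI m) (hρψ m) x hm
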